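/- If gcd(c,d) = 1, then the generalized quadratic Gauss sum satisfies the multiplicativity relation G(a,b,cd) = G(ac,b,d) · G(ad,b,c). -/

import Mathlib

open Complex Real Finset

/-- The generalized quadratic Gauss sum `G(a,b,c) = ∑_{n=0}^{c-1} e^{2πi(an²+bn)/c}`. -/
noncomputable def gaussSumG (a b : ℤ) (c : ℕ) : ℂ :=
  ∑ n ∈ Finset.range c,
    Complex.exp (2 * Real.pi * Complex.I * ((a * (n : ℤ) ^ 2 + b * (n : ℤ) : ℤ) : ℂ) / (c : ℂ))

noncomputable def eN (N : ℕ) (k : ℤ) : ℂ :=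
  Complex.exp (2 * Real.pi * Complex.I * (k : ℂ) / (N : ℂ))

lemma gaussSumG_eq (a b : ℤ) (c : ℕ) :
    gaussSumG a b c = ∑ n ∈ Finset.range c, eN c (a * (n : ℤ) ^ 2 + b * (n : ℤ)) := rfl

lemma eN_congr {N : ℕ} (hN : 0 < N) {k k' : ℤ} (hkk : k ≡ k' [ZMOD (N : ℤ)]) :
    eN N k = eN N k' := by
  obtain ⟨t, ht⟩ := hkk.dvd
  have hk' : (k' : ℂ) = k + N * t := by
    have : k' = k + N * t := by linarith [ht]
    rw [this]; push_cast; ring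
  have hNC : (N : ℂ) ≠ 0 := Nat.cast_ne_zero.mpr hN.ne'
  unfold eN
  rw [hk']
  rw [show 2 * (Real.pi : ℂ) * Complex.I * ((k : ℂ) + N * t) / N
      = 2 * (Real.pi : ℂ) * Complex.I * (k : ℂ) / N + t * (2 * Real.pi * Complex.I) by
    field_simp]
  rw [Complex.exp_add, Complex.exp_int_mul_two_pi_mul_I, mul_one]

lemma eN_split {c d : ℕ} (hc : 0 < c) (hd : 0 < d) (X Y : ℤ) :
    eN d X * eN c Y = eN (c * d) (c * X + d * Y) := by
  have hcC : (c : ℂ) ≠ 0 := Nat.cast_ne_zero.mpr hc.ne'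
  have hdC : (d : ℂ) ≠ 0 := Nat.cast_ne_zero.mpr hd.ne'
  unfold eN
  rw [← Complex.exp_add]
  congr 1
  push_cast
  field_simp

/-- If `gcd(c,d) = 1`, then `G(a,b,cd) = G(ac,b,d) · G(ad,b,c)`. -/
theorem gaussSumG_multiplicative (a b : ℤ) (c d : ℕ) (hc : 0 < c) (hd : 0 < d) (h : Nat.gcd c d = 1) :
    gaussSumG a b (c * d) = gaussSumG (a * (c : ℤ)) b d * gaussSumG (a * (d : ℤ)) b c := by
  haveI : NeZero c := ⟨hc.ne'⟩
  haveI : NeZero d := ⟨hd.ne'⟩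
  have hcop : Nat.Coprime c d := h
  set d' : ℕ := ((d : ZMod c)⁻¹).val with hd'def
  set c' : ℕ := ((c : ZMod d)⁻¹).val with hc'def
  have hdd' : d * d' ≡ 1 [MOD c] := by
    rw [← ZMod.natCast_eq_natCast_iff]
    push_cast
    rw [hd'def, ZMod.natCast_val, ZMod.cast_id]
    exact ZMod.coe_mul_inv_eq_one d hcop.symm
  have hcc' : c * c' ≡ 1 [MOD d] := by
    rw [← ZMod.natCast_eq_natCast_iff]
    push_cast
    rw [hc'def, ZMod.natCast_val, ZMod.cast_id]
    exact ZMod.coe_mul_inv_eq_one c hcop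
  -- key congruence: for any n, d*(d'*n % c) + c*(c'*n % d) ≡ n [MOD c*d]
  have key : ∀ n : ℕ, d * (d' * n % c) + c * (c' * n % d) ≡ n [MOD c * d] := by
    intro n
    rw [← Nat.modEq_and_modEq_iff_modEq_mul hcop]
    constructor
    · calc d * (d' * n % c) + c * (c' * n % d)
          ≡ d * (d' * n) + 0 [MOD c] := by
            exact Nat.ModEq.add ((Nat.mod_modEq _ _).mul_left d)
              ((Nat.modEq_zero_iff_dvd.mpr (dvd_mul_right c _)))
        _ = (d * d') * n + 0 := by ring
        _ ≡ 1 * n + 0 [MOD c] := (hdd'.mul_right n).add_right 0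
        _ = n := by ring
    · calc d * (d' * n % c) + c * (c' * n % d)
          ≡ 0 + c * (c' * n) [MOD d] := by
            exact Nat.ModEq.add (Nat.modEq_zero_iff_dvd.mpr (dvd_mul_right d _))
              ((Nat.mod_modEq _ _).mul_left c)
        _ = 0 + (c * c') * n := by ring
        _ ≡ 0 + 1 * n [MOD d] := (hcc'.mul_right n).add_left 0
        _ = n := by ring
  rw [gaussSumG_eq, gaussSumG_eq, gaussSumG_eq, Finset.sum_mul_sum, ← Finset.sum_product']
  refine Finset.sum_nbij' (i := fun n => ((c' * n) % d, (d' * n) % c))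
      (j := fun p => (d * p.2 + c * p.1) % (c * d)) ?_ ?_ ?_ ?_ ?_
  · intro n hn
    simp [Nat.mod_lt _ hd, Nat.mod_lt _ hc]
  · intro p hp
    simp only [Finset.mem_range]
    exact Nat.mod_lt _ (Nat.mul_pos hc hd)
  · -- left inverse: j (i n) = n
    intro n hn
    simp only [Finset.mem_range] at hn
    have := (key n).symm
    unfold Nat.ModEq at this
    simpa [Nat.mod_eq_of_lt hn] using this.symm
  · -- right inverse: i (j p) = p
    intro p hp
    simp only [Finset.mem_range, Finset.mem_product] at hp
    obtain ⟨hs, hr⟩ := hp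
    have hmod : ∀ (e e' : ℕ) (he : 0 < e), e ∣ c * d →
        ∀ x : ℕ, (e' * (x % (c * d))) % e = (e' * x) % e := by
      intro e e' he hdvd x
      have h1 : x % (c * d) ≡ x [MOD e] :=
        Nat.ModEq.of_dvd hdvd (Nat.mod_mod_of_dvd x dvd_rfl ▸ Nat.mod_modEq x (c * d))
      exact h1.mul_left e'
    ext
    · -- first coordinate: (c' * ((d*r + c*s) % (c*d))) % d = s
      show (c' * ((d * p.2 + c * p.1) % (c * d))) % d = p.1
      rw [hmod d c' hd (dvd_mul_left d c)]
      have : c' * (d * p.2 + c * p.1) ≡ p.1 [MOD d] := by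
        calc c' * (d * p.2 + c * p.1)
            ≡ 0 + c' * (c * p.1) [MOD d] := by
              rw [mul_add]
              exact Nat.ModEq.add_right _
                (Nat.modEq_zero_iff_dvd.mpr ⟨c' * p.2, by ring⟩)
          _ = 0 + (c * c') * p.1 := by ring
          _ ≡ 0 + 1 * p.1 [MOD d] := (hcc'.mul_right _).add_left 0
          _ = p.1 := by ring
      unfold Nat.ModEq at this
      rw [this, Nat.mod_eq_of_lt hs]
    · show (d' * ((d * p.2 + c * p.1) % (c * d))) % c = p.2
      rw [hmod c d' hc (dvd_mul_right c d)]
      have : d' * (d * p.2 + c * p.1) ≡ p.2 [MOD c] := by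
        calc d' * (d * p.2 + c * p.1)
            ≡ d' * (d * p.2) + 0 [MOD c] := by
              rw [mul_add]
              exact Nat.ModEq.add_left _
                (Nat.modEq_zero_iff_dvd.mpr ⟨d' * p.1, by ring⟩)
          _ = (d * d') * p.2 + 0 := by ring
          _ ≡ 1 * p.2 + 0 [MOD c] := (hdd'.mul_right _).add_right 0
          _ = p.2 := by ring
      unfold Nat.ModEq at this
      rw [this, Nat.mod_eq_of_lt hr]
  · -- value equality
    intro n hn
    simp only [Finset.mem_range] at hn
    set s : ℕ := (c' * n) % d with hsdef
    set r : ℕ := (d' * n) % c with hrdef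
    show eN (c * d) (a * (n : ℤ) ^ 2 + b * (n : ℤ))
        = eN d (a * c * (s : ℤ) ^ 2 + b * s) * eN c (a * d * (r : ℤ) ^ 2 + b * r)
    rw [eN_split hc hd]
    apply eN_congr (Nat.mul_pos hc hd)
    have hm : ((d * r + c * s : ℕ) : ℤ) ≡ (n : ℤ) [ZMOD ((c * d : ℕ) : ℤ)] :=
      Int.natCast_modEq_iff.mpr (key n)
    push_cast at hm ⊢
    have hm2 : (a * (n:ℤ)^2 + b * n) ≡ a * ((d:ℤ) * r + c * s)^2 + b * ((d:ℤ) * r + c * s)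
        [ZMOD ((c:ℤ) * d)] := by
      exact ((hm.symm.pow 2).mul_left a).add (hm.symm.mul_left b)
    refine hm2.trans ?_
    have hcross : a * ((d:ℤ) * r + c * s)^2 + b * ((d:ℤ) * r + c * s)
        = ((c:ℤ) * (a * c * s^2 + b * s) + d * (a * d * r^2 + b * r))
          + (c * d) * (2 * a * r * s) := by ring
    rw [hcross]
    exact (Int.modEq_add_fac_self).trans Int.ModEq.rfl
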